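/- arXiv:1801.01457 — 2 statements merged into one kernel-verified Lean document; each statement's English description precedes it below -/
import Mathlib

section
/- Let n ≥ 2 and r ≥ 1 be integers and a, b ∈ ℂ. Then the function p_r(t) = (a + b·t^(n−1))·(log t)^(r−1) on (0,∞) satisfies T^r(p_r)(t) = 0 for all t > 0, where T^r is the r-th iterate of the radial operator T(p)(t) = t²·p''(t) − (n−2)·t·p'(t). -/
open Real Set Finset

/-- The radial hyperbolic operator `T(p)(t) = t²·p''(t) − (n−2)·t·p'(t)`. -/
noncomputable def radialT (n : ℕ) (p : ℝ → ℂ) : ℝ → ℂ := fun t =>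
  (t : ℂ) ^ 2 * deriv (deriv p) t - ((n : ℂ) - 2) * (t : ℂ) * deriv p t

namespace RadialAux

lemma cpow_deriv {f : ℝ → ℂ} {f' : ℂ} {t : ℝ} (h : HasDerivAt f f' t) (k : ℕ) :
    HasDerivAt (fun s => (f s)^k) ((k:ℂ) * (f t)^(k-1) * f') t := by
  have h2 := HasDerivAt.scomp (x := t) (hasDerivAt_pow k (f t)) h
  refine h2.congr_deriv ?_
  rw [smul_eq_mul]; ring

lemma cinv {t : ℝ} (ht : 0 < t) :
    HasDerivAt (fun s : ℝ => ((s:ℂ))⁻¹) (-(((t:ℂ))^2)⁻¹) t := by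
  have h := (hasDerivAt_inv ht.ne').ofReal_comp
  simp only [Complex.ofReal_inv, Complex.ofReal_neg, Complex.ofReal_pow] at h
  exact h

lemma hasDerivAt_X (t : ℝ) : HasDerivAt (fun s : ℝ => (s:ℂ)) 1 t :=
  (hasDerivAt_id t).ofReal_comp

lemma hasDerivAt_Xpow (m : ℕ) (t : ℝ) :
    HasDerivAt (fun s : ℝ => (s:ℂ)^m) ((m:ℂ) * (t:ℂ)^(m-1)) t := by
  simpa using cpow_deriv (hasDerivAt_X t) m

lemma hasDerivAt_L {t : ℝ} (ht : 0 < t) :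
    HasDerivAt (fun s : ℝ => (Real.log s : ℂ)) ((t:ℂ)⁻¹) t := by
  have h := (Real.hasDerivAt_log ht.ne').ofReal_comp
  rw [Complex.ofReal_inv] at h
  exact h

lemma hasDerivAt_Lpow (k : ℕ) {t : ℝ} (ht : 0 < t) :
    HasDerivAt (fun s : ℝ => ((Real.log s : ℂ))^k)
      ((k:ℂ) * ((Real.log t:ℂ))^(k-1) * (t:ℂ)⁻¹) t :=
  cpow_deriv (hasDerivAt_L ht) k

/-- basis function -/
noncomputable def P (n : ℕ) (c d : ℂ) (k : ℕ) : ℝ → ℂ :=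
  fun t => (c + d * (t:ℂ)^(n-1)) * ((Real.log t : ℂ))^k

/-- first derivative formula -/
noncomputable def F (n : ℕ) (c d : ℂ) (k : ℕ) : ℝ → ℂ := fun t =>
  d * ((n-1:ℕ):ℂ) * (t:ℂ)^(n-2) * ((Real.log t:ℂ))^k
    + (c + d*(t:ℂ)^(n-1)) * (k:ℂ) * ((Real.log t:ℂ))^(k-1) * (t:ℂ)⁻¹

/-- second derivative formula -/
noncomputable def G (n : ℕ) (c d : ℂ) (k : ℕ) : ℝ → ℂ := fun t =>
  d * ((n-1:ℕ):ℂ) * ((n-2:ℕ):ℂ) * (t:ℂ)^(n-3) * (Real.log t:ℂ)^k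
  + d * ((n-1:ℕ):ℂ) * (t:ℂ)^(n-2) * (k:ℂ) * (Real.log t:ℂ)^(k-1) * (t:ℂ)⁻¹
  + (d * ((n-1:ℕ):ℂ) * (t:ℂ)^(n-2) * (k:ℂ) * (Real.log t:ℂ)^(k-1) * (t:ℂ)⁻¹
  + (c + d*(t:ℂ)^(n-1)) * (k:ℂ) * ((k-1:ℕ):ℂ) * (Real.log t:ℂ)^(k-2) * (t:ℂ)⁻¹ * (t:ℂ)⁻¹
  - (c + d*(t:ℂ)^(n-1)) * (k:ℂ) * (Real.log t:ℂ)^(k-1) * ((t:ℂ)^2)⁻¹)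

lemma H1 (n : ℕ) (c d : ℂ) (k : ℕ) {t : ℝ} (ht : 0 < t) :
    HasDerivAt (P n c d k) (F n c d k t) t := by
  have hg : HasDerivAt (fun s : ℝ => c + d * (s:ℂ)^(n-1))
      (d * ((n-1:ℕ):ℂ) * (t:ℂ)^(n-1-1)) t := by
    simpa [mul_assoc] using ((hasDerivAt_Xpow (n-1) t).const_mul d)
  have h := hg.mul (hasDerivAt_Lpow k ht)
  have e : n - 1 - 1 = n - 2 := by omega
  rw [e] at h
  refine h.congr_deriv ?_
  simp only [F]
  ring

lemma H2 (n : ℕ) (c d : ℂ) (k : ℕ) {t : ℝ} (ht : 0 < t) :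
    HasDerivAt (F n c d k) (G n c d k t) t := by
  have h1 : HasDerivAt (fun s : ℝ => d * ((n-1:ℕ):ℂ) * (s:ℂ)^(n-2) * ((Real.log s:ℂ))^k)
      (d * ((n-1:ℕ):ℂ) * ((n-2:ℕ):ℂ) * (t:ℂ)^(n-3) * (Real.log t:ℂ)^k
        + d * ((n-1:ℕ):ℂ) * (t:ℂ)^(n-2) * (k:ℂ) * (Real.log t:ℂ)^(k-1) * (t:ℂ)⁻¹) t := by
    have h := (((hasDerivAt_Xpow (n-2) t).const_mul (d * ((n-1:ℕ):ℂ))).mul (hasDerivAt_Lpow k ht))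
    have e : n - 2 - 1 = n - 3 := by omega
    rw [e] at h
    refine h.congr_deriv ?_
    ring
  have hg : HasDerivAt (fun s : ℝ => c + d * (s:ℂ)^(n-1))
      (d * ((n-1:ℕ):ℂ) * (t:ℂ)^(n-2)) t := by
    have e : n - 1 - 1 = n - 2 := by omega
    simpa [mul_assoc, e] using ((hasDerivAt_Xpow (n-1) t).const_mul d)
  have h2 : HasDerivAt
      (fun s : ℝ => (c + d*(s:ℂ)^(n-1)) * (k:ℂ) * ((Real.log s:ℂ))^(k-1) * (s:ℂ)⁻¹)
      (d * ((n-1:ℕ):ℂ) * (t:ℂ)^(n-2) * (k:ℂ) * (Real.log t:ℂ)^(k-1) * (t:ℂ)⁻¹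
        + (c + d*(t:ℂ)^(n-1)) * (k:ℂ) * ((k-1:ℕ):ℂ) * (Real.log t:ℂ)^(k-2) * (t:ℂ)⁻¹ * (t:ℂ)⁻¹
        - (c + d*(t:ℂ)^(n-1)) * (k:ℂ) * (Real.log t:ℂ)^(k-1) * ((t:ℂ)^2)⁻¹) t := by
    have h := (((hg.mul_const ((k:ℂ))).mul (hasDerivAt_Lpow (k-1) ht)).mul (cinv ht))
    have e : k - 1 - 1 = k - 2 := by omega
    rw [e] at h
    refine h.congr_deriv ?_
    simp only [Pi.mul_apply]
    ring
  have h := h1.add h2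
  exact h

end RadialAux

namespace RadialAux

lemma Kalg (n : ℕ) (hn : 2 ≤ n) (c d : ℂ) (k : ℕ) {t : ℝ} (ht : 0 < t) :
    (t:ℂ)^2 * G n c d k t - ((n:ℂ)-2) * (t:ℂ) * F n c d k t
      = P n (c*(k:ℂ)*((k-1:ℕ):ℂ)) (d*(k:ℂ)*((k-1:ℕ):ℂ)) (k-2) t
        + P n (-(((n-1:ℕ):ℂ))*(k:ℂ)*c) (((n-1:ℕ):ℂ)*(k:ℂ)*d) (k-1) t := by
  have htC : (t:ℂ) ≠ 0 := by exact_mod_cast ht.ne'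
  have hcast : ((n:ℂ)-2) = ((n-2:ℕ):ℂ) := by
    push_cast [Nat.cast_sub hn]; ring
  rw [hcast]
  simp only [P, F, G]
  simp only [inv_eq_one_div]
  rcases eq_or_lt_of_le hn with h2 | h3
  · subst h2
    norm_num
    field_simp
    ring
  · have e1 : n - 1 = (n-3) + 2 := by omega
    have e2 : n - 2 = (n-3) + 1 := by omega
    rw [e1, e2]
    push_cast
    field_simp
    rw [sub_eq_iff_eq_add]
    ring

end RadialAux

namespace RadialAux
open Filter

noncomputable def Ssum (n m : ℕ) (C D : ℕ → ℂ) : ℝ → ℂ :=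
  fun t => ∑ j ∈ Finset.range m, P n (C j) (D j) j t

lemma hasDerivAt_Ssum (n m : ℕ) (C D : ℕ → ℂ) {t : ℝ} (ht : 0 < t) :
    HasDerivAt (Ssum n m C D) (∑ j ∈ Finset.range m, F n (C j) (D j) j t) t :=
  HasDerivAt.fun_sum (fun j _ => H1 n (C j) (D j) j ht)

lemma radialT_Ssum (n : ℕ) (hn : 2 ≤ n) (m : ℕ) (C D : ℕ → ℂ) :
    Set.EqOn (radialT n (Ssum n m C D))
      (fun t => ∑ j ∈ Finset.range m,
        (P n (C j * (j:ℂ) * ((j-1:ℕ):ℂ)) (D j * (j:ℂ) * ((j-1:ℕ):ℂ)) (j-2) t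
          + P n (-(((n-1:ℕ):ℂ)) * (j:ℂ) * C j) (((n-1:ℕ):ℂ) * (j:ℂ) * D j) (j-1) t))
      (Set.Ioi 0) := by
  intro t ht
  have ht' : (0:ℝ) < t := ht
  have hd1 : deriv (Ssum n m C D) t = ∑ j ∈ Finset.range m, F n (C j) (D j) j t :=
    (hasDerivAt_Ssum n m C D ht').deriv
  have hev : deriv (Ssum n m C D) =ᶠ[nhds t] (fun s => ∑ j ∈ Finset.range m, F n (C j) (D j) j s) :=
    eventually_of_mem (isOpen_Ioi.mem_nhds ht) (fun s hs => (hasDerivAt_Ssum n m C D hs).deriv)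
  have hd2 : deriv (deriv (Ssum n m C D)) t = ∑ j ∈ Finset.range m, G n (C j) (D j) j t := by
    rw [hev.deriv_eq]
    exact (HasDerivAt.fun_sum (fun j _ => H2 n (C j) (D j) j ht')).deriv
  show (t:ℂ)^2 * deriv (deriv (Ssum n m C D)) t - ((n:ℂ)-2) * (t:ℂ) * deriv (Ssum n m C D) t = _
  rw [hd1, hd2, Finset.mul_sum, Finset.mul_sum, ← Finset.sum_sub_distrib]
  exact Finset.sum_congr rfl fun j _ => Kalg n hn (C j) (D j) j ht'

lemma deriv_congr_Ioi {p q : ℝ → ℂ} (h : Set.EqOn p q (Set.Ioi 0)) {t : ℝ}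
    (ht : t ∈ Set.Ioi (0:ℝ)) : deriv p t = deriv q t :=
  Filter.EventuallyEq.deriv_eq (eventually_of_mem (isOpen_Ioi.mem_nhds ht) h)

lemma radialT_congr (n : ℕ) {p q : ℝ → ℂ} (h : Set.EqOn p q (Set.Ioi 0)) :
    Set.EqOn (radialT n p) (radialT n q) (Set.Ioi 0) := by
  intro t ht
  have h1 : Set.EqOn (deriv p) (deriv q) (Set.Ioi 0) := fun s hs => deriv_congr_Ioi h hs
  show (t:ℂ)^2 * deriv (deriv p) t - ((n:ℂ)-2) * (t:ℂ) * deriv p t = _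
  rw [deriv_congr_Ioi h1 ht, h1 ht]
  rfl

lemma iterate_congr (n r : ℕ) {p q : ℝ → ℂ} (h : Set.EqOn p q (Set.Ioi 0)) :
    Set.EqOn ((radialT n)^[r] p) ((radialT n)^[r] q) (Set.Ioi 0) := by
  induction r generalizing p q with
  | zero => simpa using h
  | succ r ih =>
    rw [Function.iterate_succ_apply, Function.iterate_succ_apply]
    exact ih (radialT_congr n h)

end RadialAux

namespace RadialAux

lemma shift1 (f : ℕ → ℂ) (m : ℕ) (h0 : f 0 = 0) :
    ∑ j ∈ Finset.range (m+1), f j = ∑ i ∈ Finset.range m, f (i+1) := by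
  rw [Finset.sum_range_succ' f m, h0, add_zero]

lemma shift2 (f : ℕ → ℂ) (m : ℕ) (h0 : f 0 = 0) (h1 : f 1 = 0) (hm : f (m+1) = 0) :
    ∑ j ∈ Finset.range (m+1), f j = ∑ i ∈ Finset.range m, f (i+2) := by
  have e1 : ∑ i ∈ Finset.range (m+2), f i
      = (∑ i ∈ Finset.range m, f (i+2) + f 1) + f 0 := by
    rw [Finset.sum_range_succ' f (m+1), Finset.sum_range_succ' (fun i => f (i+1)) m]
  rw [show m + 2 = (m+1)+1 from rfl, Finset.sum_range_succ f (m+1)] at e1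
  rw [h0, h1, hm, add_zero, add_zero, add_zero] at e1
  exact e1

lemma main (n : ℕ) (hn : 2 ≤ n) : ∀ m (C D : ℕ → ℂ),
    Set.EqOn ((radialT n)^[m] (Ssum n m C D)) 0 (Set.Ioi 0) := by
  intro m
  induction m with
  | zero => intro C D t ht; simp [Ssum]
  | succ m ih =>
    intro C D
    set Cz : ℕ → ℂ := fun j => if j ≤ m then C j else 0 with hCz
    set Dz : ℕ → ℂ := fun j => if j ≤ m then D j else 0 with hDz
    have hSS : Ssum n (m+1) C D = Ssum n (m+1) Cz Dz := by
      funext t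
      refine Finset.sum_congr rfl fun j hj => ?_
      have hj' : j ≤ m := Nat.lt_succ_iff.mp (Finset.mem_range.mp hj)
      simp [P, hCz, hDz, hj']
    set C' : ℕ → ℂ := fun i =>
      Cz (i+2) * ((i+2:ℕ):ℂ) * ((i+1:ℕ):ℂ) + -(((n-1:ℕ):ℂ)) * ((i+1:ℕ):ℂ) * Cz (i+1) with hC'
    set D' : ℕ → ℂ := fun i =>
      Dz (i+2) * ((i+2:ℕ):ℂ) * ((i+1:ℕ):ℂ) + ((n-1:ℕ):ℂ) * ((i+1:ℕ):ℂ) * Dz (i+1) with hD'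
    have hstep : Set.EqOn (radialT n (Ssum n (m+1) Cz Dz)) (Ssum n m C' D') (Set.Ioi 0) := by
      intro t ht
      rw [radialT_Ssum n hn (m+1) Cz Dz ht]
      beta_reduce
      rw [Finset.sum_add_distrib]
      have hA : ∑ j ∈ Finset.range (m+1),
            P n (Cz j * (j:ℂ) * ((j-1:ℕ):ℂ)) (Dz j * (j:ℂ) * ((j-1:ℕ):ℂ)) (j-2) t
          = ∑ i ∈ Finset.range m,
            P n (Cz (i+2) * ((i+2:ℕ):ℂ) * ((i+1:ℕ):ℂ)) (Dz (i+2) * ((i+2:ℕ):ℂ) * ((i+1:ℕ):ℂ)) i t := by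
        rw [shift2 (fun j => P n (Cz j * (j:ℂ) * ((j-1:ℕ):ℂ)) (Dz j * (j:ℂ) * ((j-1:ℕ):ℂ)) (j-2) t) m
          (by simp [P]) (by norm_num [P]) (by simp [P, hCz, hDz])]
        refine Finset.sum_congr rfl fun i _ => ?_
        have e1 : i + 2 - 1 = i + 1 := by omega
        have e2 : i + 2 - 2 = i := by omega
        rw [e1, e2]
      have hB : ∑ j ∈ Finset.range (m+1),
            P n (-(((n-1:ℕ):ℂ)) * (j:ℂ) * Cz j) (((n-1:ℕ):ℂ) * (j:ℂ) * Dz j) (j-1) t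
          = ∑ i ∈ Finset.range m,
            P n (-(((n-1:ℕ):ℂ)) * ((i+1:ℕ):ℂ) * Cz (i+1)) (((n-1:ℕ):ℂ) * ((i+1:ℕ):ℂ) * Dz (i+1)) i t := by
        rw [shift1 (fun j => P n (-(((n-1:ℕ):ℂ)) * (j:ℂ) * Cz j) (((n-1:ℕ):ℂ) * (j:ℂ) * Dz j) (j-1) t) m
          (by simp [P])]
        refine Finset.sum_congr rfl fun i _ => ?_
        have e1 : i + 1 - 1 = i := by omega
        rw [e1]
      rw [hA, hB, ← Finset.sum_add_distrib]
      refine (Finset.sum_congr rfl fun i _ => ?_).symm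
      simp only [P, hC', hD']
      ring
    intro t ht
    rw [hSS, Function.iterate_succ_apply]
    rw [iterate_congr n m hstep ht]
    exact ih C' D' ht

end RadialAux


open RadialAux in
/-- For integers `n ≥ 2`, `r ≥ 1` and `a, b ∈ ℂ`, the function
`p_r(t) = (a + b·t^(n−1))·(log t)^(r−1)` satisfies `T^r(p_r)(t) = 0` for all
`t > 0`, where `T^r` is the `r`-th iterate of the radial operator `T`. -/
theorem radialT_iterate_vanishes (n r : ℕ) (hn : 2 ≤ n) (hr : 1 ≤ r) (a b : ℂ) :
    ∀ t ∈ Set.Ioi (0 : ℝ),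
      (radialT n)^[r]
        (fun t => (a + b * (t : ℂ) ^ (n - 1)) * (Real.log t : ℂ) ^ (r - 1)) t
        = 0 := by
  have hfun : (fun t : ℝ => (a + b * (t : ℂ) ^ (n - 1)) * (Real.log t : ℂ) ^ (r - 1))
      = Ssum n r (fun j => if j = r-1 then a else 0) (fun j => if j = r-1 then b else 0) := by
    funext t
    rw [Ssum, Finset.sum_eq_single_of_mem (r-1) (Finset.mem_range.mpr (by omega))
      (fun j _ hj => by simp [P, hj])]
    simp [P]
  intro t ht
  rw [hfun]
  simpa using main n hn r _ _ ht
end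

section
/- Let n ≥ 2 and r ≥ 1 be integers and let (a,b) ∈ ℂ² be non-zero. Then for the function p_r(t) = (a + b·t^(n−1))·(log t)^(r−1) on (0,∞), the (r−1)-st iterate T^(r−1)(p_r) does not vanish identically on (0,∞), where T is the radial operator T(p)(t) = t²·p''(t) − (n−2)·t·p'(t). -/
open Polynomial Set


noncomputable def Efun (R : ℂ[X]) : ℝ → ℂ := fun t => R.eval ((Real.log t : ℂ))

lemma hasDerivAt_Efun (R : ℂ[X]) {t : ℝ} (ht : 0 < t) :
    HasDerivAt (Efun R) ((t:ℂ)⁻¹ * (Efun (derivative R) t)) t := by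
  have h1 : HasDerivAt (fun s : ℝ => ((Real.log s : ℝ) : ℂ)) ((t⁻¹ : ℝ) : ℂ) t :=
    (Real.hasDerivAt_log ht.ne').ofReal_comp
  have h2 := (Polynomial.hasDerivAt R (((Real.log t : ℝ)) : ℂ))
  have := HasDerivAt.scomp (𝕜 := ℝ) (𝕜' := ℂ) t h2 h1
  simp [Efun, Function.comp_def, smul_eq_mul, Complex.ofReal_inv] at this
  exact this

lemma hasDerivAt_cpow (k : ℕ) (t : ℝ) :
    HasDerivAt (fun s : ℝ => ((s:ℂ)) ^ k) ((k:ℂ) * (t:ℂ) ^ (k-1)) t :=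
  (hasDerivAt_pow k ((t:ℝ):ℂ)).comp_ofReal

lemma hasDerivAt_cinv {t : ℝ} (ht : 0 < t) :
    HasDerivAt (fun s : ℝ => ((s:ℂ))⁻¹) (-(((t:ℂ)) ^ 2)⁻¹) t := by
  have : ((t:ℝ):ℂ) ≠ 0 := by exact_mod_cast ht.ne'
  exact (hasDerivAt_inv this).comp_ofReal

noncomputable def Ffun (m : ℕ) (P Q : ℂ[X]) : ℝ → ℂ :=
  fun t => Efun P t + (t:ℂ)^m * Efun Q t

lemma cpow_pred {u : ℂ} (hu : u ≠ 0) (k : ℕ) : (k:ℂ) * u^(k-1) = (k:ℂ) * u^k * u⁻¹ := by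
  cases k with
  | zero => simp
  | succ k => rw [Nat.add_sub_cancel, pow_succ, mul_assoc, mul_assoc,
      mul_inv_cancel₀ hu, mul_one]

lemma radialT_Ffun (k : ℕ) (P Q : ℂ[X]) {t : ℝ} (ht : t ∈ Ioi (0:ℝ)) :
    radialT (k+2) (Ffun (k+1) P Q) t =
      Ffun (k+1) (derivative (derivative P) - C ((k:ℂ)+1) * derivative P)
        (derivative (derivative Q) + C ((k:ℂ)+1) * derivative Q) t := by
  simp only [mem_Ioi] at ht
  set F1 : ℝ → ℂ := fun s => (s:ℂ)⁻¹ * Efun (derivative P) s +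
      (((k:ℂ)+1) * ((s:ℂ)^k * Efun Q s) +
        (s:ℂ)^(k+1) * ((s:ℂ)⁻¹ * Efun (derivative Q) s)) with hF1def
  have hF1 : ∀ s ∈ Ioi (0:ℝ), HasDerivAt (Ffun (k+1) P Q) (F1 s) s := by
    intro s hs
    simp only [mem_Ioi] at hs
    have h := (hasDerivAt_Efun P hs).add
      ((hasDerivAt_cpow (k+1) s).mul (hasDerivAt_Efun Q hs))
    have hu : ((s:ℝ):ℂ) ≠ 0 := by exact_mod_cast hs.ne'
    convert h using 1
    · rfl
    · rfl
    simp only [hF1def, Nat.add_sub_cancel]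
    push_cast
    ring
  have hderiv : Set.EqOn (deriv (Ffun (k+1) P Q)) F1 (Ioi 0) :=
    fun s hs => (hF1 s hs).deriv
  -- second derivative
  have hF2 : HasDerivAt F1
      ((-(((t:ℂ))^2)⁻¹ * Efun (derivative P) t +
        (t:ℂ)⁻¹ * ((t:ℂ)⁻¹ * Efun (derivative (derivative P)) t)) +
       (((k:ℂ)+1) * (((k:ℂ) * (t:ℂ)^(k-1)) * Efun Q t +
          (t:ℂ)^k * ((t:ℂ)⁻¹ * Efun (derivative Q) t)) +
        ((((k:ℂ)+1) * (t:ℂ)^k) * ((t:ℂ)⁻¹ * Efun (derivative Q) t) +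
          (t:ℂ)^(k+1) * (-(((t:ℂ))^2)⁻¹ * Efun (derivative Q) t +
            (t:ℂ)⁻¹ * ((t:ℂ)⁻¹ * Efun (derivative (derivative Q)) t))))) t := by
    have h1 := (hasDerivAt_cinv ht).mul (hasDerivAt_Efun (derivative P) ht)
    have h2 := (((hasDerivAt_cpow k t).mul (hasDerivAt_Efun Q ht)).const_mul
      ((k:ℂ)+1))
    have h3 := (hasDerivAt_cpow (k+1) t).mul
      ((hasDerivAt_cinv ht).mul (hasDerivAt_Efun (derivative Q) ht))
    have h := h1.add (h2.add h3)
    convert h using 1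
    · rfl
    · rfl
    simp only [Nat.add_sub_cancel, Pi.mul_apply]
    push_cast
    ring
  have hu : ((t:ℝ):ℂ) ≠ 0 := by exact_mod_cast ht.ne'
  have hd2 : deriv (deriv (Ffun (k+1) P Q)) t = _ :=
    ((hderiv.eventuallyEq_of_mem (isOpen_Ioi.mem_nhds ht)).deriv_eq).trans hF2.deriv
  have hd1 : deriv (Ffun (k+1) P Q) t = F1 t := hderiv ht
  rw [radialT, hd2, hd1]
  simp only [Ffun, Efun, hF1def, eval_sub, eval_add, eval_mul, eval_C]
  rw [cpow_pred hu k]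
  push_cast
  field_simp
  ring_nf

lemma radialT_congr {n : ℕ} {g h : ℝ → ℂ} (hgh : EqOn g h (Ioi 0)) :
    EqOn (radialT n g) (radialT n h) (Ioi 0) := by
  have h1 : EqOn (deriv g) (deriv h) (Ioi 0) := fun t ht =>
    (hgh.eventuallyEq_of_mem (isOpen_Ioi.mem_nhds ht)).deriv_eq
  have h2 : EqOn (deriv (deriv g)) (deriv (deriv h)) (Ioi 0) := fun t ht =>
    (h1.eventuallyEq_of_mem (isOpen_Ioi.mem_nhds ht)).deriv_eq
  intro t ht
  simp only [radialT, h1 ht, h2 ht]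

noncomputable def Sm (μ : ℂ) (P : ℂ[X]) : ℂ[X] :=
  derivative (derivative P) - C μ * derivative P
noncomputable def Sp (μ : ℂ) (P : ℂ[X]) : ℂ[X] :=
  derivative (derivative P) + C μ * derivative P

lemma iterEq (k : ℕ) (P Q : ℂ[X]) (j : ℕ) :
    EqOn ((radialT (k+2))^[j] (Ffun (k+1) P Q))
      (Ffun (k+1) ((Sm ((k:ℂ)+1))^[j] P) ((Sp ((k:ℂ)+1))^[j] Q)) (Ioi 0) := by
  induction j with
  | zero => intro t _; rfl
  | succ j ih =>
    intro t ht
    rw [Function.iterate_succ_apply', Function.iterate_succ_apply',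
      Function.iterate_succ_apply']
    rw [radialT_congr ih ht, radialT_Ffun k _ _ ht]
    rfl

noncomputable def Ustep (c : ℂ) (P : ℂ[X]) : ℂ[X] := derivative P + C c * P

lemma Sm_eq (μ : ℂ) (P : ℂ[X]) : Sm μ P = derivative (Ustep (-μ) P) := by
  simp [Sm, Ustep, derivative_add, derivative_C_mul, map_neg, sub_eq_add_neg,
    neg_mul]

lemma Sp_eq (μ : ℂ) (P : ℂ[X]) : Sp μ P = derivative (Ustep μ P) := by
  simp [Sp, Ustep, derivative_add, derivative_C_mul]

lemma commute_deriv_Ustep (c : ℂ) :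
    Function.Commute (fun P : ℂ[X] => derivative P) (Ustep c) := by
  intro P
  simp [Ustep, derivative_add, derivative_C_mul]

lemma Sm_iterate (μ : ℂ) (j : ℕ) (P : ℂ[X]) :
    (Sm μ)^[j] P = (fun R : ℂ[X] => derivative R)^[j] ((Ustep (-μ))^[j] P) := by
  have : Sm μ = (fun R : ℂ[X] => derivative R) ∘ (Ustep (-μ)) := by
    funext R; exact Sm_eq μ R
  rw [this, (commute_deriv_Ustep (-μ)).comp_iterate]
  rfl

lemma Sp_iterate (μ : ℂ) (j : ℕ) (P : ℂ[X]) :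
    (Sp μ)^[j] P = (fun R : ℂ[X] => derivative R)^[j] ((Ustep μ)^[j] P) := by
  have : Sp μ = (fun R : ℂ[X] => derivative R) ∘ (Ustep μ) := by
    funext R; exact Sp_eq μ R
  rw [this, (commute_deriv_Ustep μ).comp_iterate]
  rfl

lemma Ustep_iter (c a : ℂ) (d j : ℕ) :
    ((Ustep c)^[j] (C a * X^d)).natDegree ≤ d ∧
      ((Ustep c)^[j] (C a * X^d)).coeff d = a * c^j := by
  induction j with
  | zero =>
    constructor
    · exact (natDegree_C_mul_le a (X^d)).trans (natDegree_X_pow_le d)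
    · simp [coeff_C_mul, coeff_X_pow]
  | succ j ih =>
    rw [Function.iterate_succ_apply']
    set R := (Ustep c)^[j] (C a * X^d) with hR
    constructor
    · refine (natDegree_add_le _ _).trans (max_le ?_ ?_)
      · exact (natDegree_derivative_le R).trans ((Nat.sub_le _ _).trans ih.1)
      · exact (natDegree_C_mul_le c R).trans ih.1
    · have hz : R.coeff (d+1) = 0 :=
        coeff_eq_zero_of_natDegree_lt (lt_of_le_of_lt ih.1 (lt_add_one d))
      simp [Ustep, coeff_add, coeff_derivative, coeff_C_mul, hz, ih.2, pow_succ]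
      ring

lemma iterate_derivative_of_natDegree_le (d : ℕ) :
    ∀ P : ℂ[X], P.natDegree ≤ d →
      (fun R : ℂ[X] => derivative R)^[d] P = C ((d.factorial : ℂ) * P.coeff d) := by
  induction d with
  | zero =>
    intro P hP
    rw [Polynomial.eq_C_of_natDegree_le_zero hP]
    simp
  | succ d ih =>
    intro P hP
    rw [Function.iterate_succ_apply, ih (derivative P)
      ((natDegree_derivative_le P).trans (Nat.sub_le_sub_right hP 1))]
    rw [coeff_derivative]
    congr 1
    push_cast [Nat.factorial_succ]
    ring


/-- For integers `n ≥ 2`, `r ≥ 1` and non-zero `(a,b) ∈ ℂ²`, for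
the function `p_r(t) = (a + b·t^(n−1))·(log t)^(r−1)` the `(r−1)`-st iterate
`T^(r−1)(p_r)` does not vanish identically on `(0,∞)`. -/
theorem radialT_iterate_not_vanish (n r : ℕ) (hn : 2 ≤ n) (hr : 1 ≤ r)
    (a b : ℂ) (hab : (a, b) ≠ (0, 0)) :
    ∃ t ∈ Set.Ioi (0 : ℝ),
      (radialT n)^[r - 1]
        (fun t => (a + b * (t : ℂ) ^ (n - 1)) * (Real.log t : ℂ) ^ (r - 1)) t
        ≠ 0 := by
  obtain ⟨k, rfl⟩ : ∃ k, n = k + 2 := ⟨n - 2, by omega⟩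
  obtain ⟨d, rfl⟩ : ∃ d, r = d + 1 := ⟨r - 1, by omega⟩
  set μ : ℂ := (k:ℂ) + 1 with hμ
  have hp : (fun t : ℝ => (a + b * (t : ℂ) ^ (k + 2 - 1)) * (Real.log t : ℂ) ^ (d + 1 - 1))
      = Ffun (k+1) (C a * X^d) (C b * X^d) := by
    funext t
    simp only [Ffun, Efun, eval_mul, eval_C, eval_pow, eval_X]
    norm_num
    ring
  rw [hp]
  -- final polynomials
  have hPm : (Sm μ)^[d] (C a * X^d) = C ((d.factorial : ℂ) * (a * (-μ)^d)) := by
    rw [Sm_iterate, iterate_derivative_of_natDegree_le d _ (Ustep_iter (-μ) a d d).1,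
      (Ustep_iter (-μ) a d d).2]
  have hPp : (Sp μ)^[d] (C b * X^d) = C ((d.factorial : ℂ) * (b * μ^d)) := by
    rw [Sp_iterate, iterate_derivative_of_natDegree_le d _ (Ustep_iter μ b d d).1,
      (Ustep_iter μ b d d).2]
  have key : ∀ t ∈ Ioi (0:ℝ),
      (radialT (k+2))^[d+1-1] (Ffun (k+1) (C a * X^d) (C b * X^d)) t
        = (d.factorial : ℂ) * (a * (-μ)^d) + (t:ℂ)^(k+1) * ((d.factorial : ℂ) * (b * μ^d)) := by
    intro t ht
    have := iterEq k (C a * X^d) (C b * X^d) (d+1-1) ht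
    rw [this]
    simp only [Nat.add_sub_cancel, ← hμ, hPm, hPp, Ffun, Efun, eval_C]
  by_contra hcon
  push_neg at hcon
  set A : ℂ := (d.factorial : ℂ) * (a * (-μ)^d) with hA
  set B : ℂ := (d.factorial : ℂ) * (b * μ^d) with hB
  have h1 : A + B = 0 := by
    have := hcon 1 (by norm_num)
    rw [key 1 (by norm_num)] at this
    simpa using this
  have h2 : A + (2:ℂ)^(k+1) * B = 0 := by
    have := hcon 2 (by norm_num)
    rw [key 2 (by norm_num)] at this
    simpa using this
  have h2pow : ((2:ℂ)^(k+1) - 1) ≠ 0 := by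
    intro h
    have h' : ((2:ℕ):ℂ)^(k+1) = ((1:ℕ):ℂ) := by
      push_cast; linear_combination h
    have : (2:ℕ)^(k+1) = 1 := by exact_mod_cast h'
    have := Nat.one_lt_two_pow (n := k+1) (by omega)
    omega
  have hBzero : B = 0 := by
    have : ((2:ℂ)^(k+1) - 1) * B = 0 := by linear_combination h2 - h1
    exact (mul_eq_zero.mp this).resolve_left h2pow
  have hAzero : A = 0 := by linear_combination h1 - hBzero
  have hfac : ((d.factorial : ℂ)) ≠ 0 := by
    exact_mod_cast Nat.factorial_ne_zero d
  have hμne : μ ≠ 0 := by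
    rw [hμ]
    exact Nat.cast_add_one_ne_zero k
  have hb : b = 0 := by
    have := mul_eq_zero.mp hBzero
    rcases this with h | h
    · exact absurd h hfac
    · rcases mul_eq_zero.mp h with h | h
      · exact h
      · exact absurd h (pow_ne_zero d hμne)
  have ha : a = 0 := by
    have := mul_eq_zero.mp hAzero
    rcases this with h | h
    · exact absurd h hfac
    · rcases mul_eq_zero.mp h with h | h
      · exact h
      · exact absurd h (pow_ne_zero d (neg_ne_zero.mpr hμne))
  exact hab (by rw [ha, hb])
end
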